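/- If x is a Cauchy random variable with location 0 and scale d > 0, then Var(log|x|) = π²/4, i.e., E((log|x|)²) = (log d)² + π²/4. -/

import Mathlib

open Real MeasureTheory Set Filter Asymptotics

-- integrability of v^k / cosh v on Ioi 0
lemma integrableOn_pow_div_cosh (k : ℕ) :
    IntegrableOn (fun v : ℝ => v ^ k / Real.cosh v) (Ioi 0) := by
  apply integrable_of_isBigO_exp_neg (b := 1/2) (by norm_num)
  · exact (continuous_pow k).continuousOn.div Real.continuous_cosh.continuousOn
      (fun x _ => (Real.cosh_pos x).ne')
  · have h1 : (fun v : ℝ => v ^ k / Real.cosh v) =O[atTop] fun v => v ^ k * Real.exp (-v) := by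
      apply IsBigO.of_bound 2
      filter_upwards [eventually_ge_atTop (0:ℝ)] with v hv
      have hc : Real.exp v / 2 ≤ Real.cosh v := by
        rw [Real.cosh_eq]
        have := Real.exp_pos (-v)
        linarith
      have hcp := Real.cosh_pos v
      rw [Real.norm_eq_abs, Real.norm_eq_abs, abs_of_nonneg (by positivity),
        abs_of_nonneg (by positivity)]
      rw [div_le_iff₀ hcp] at *
      have h2 : v ^ k ≤ 2 * (v ^ k * Real.exp (-v)) * (Real.exp v / 2) := by
        rw [Real.exp_neg]
        field_simp
        exact le_rfl
      calc v ^ k ≤ 2 * (v ^ k * Real.exp (-v)) * (Real.exp v / 2) := h2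
        _ ≤ 2 * (v ^ k * Real.exp (-v)) * Real.cosh v := by
            apply mul_le_mul_of_nonneg_left hc (by positivity)
    have h2 : (fun v : ℝ => v ^ k * Real.exp (-v)) =O[atTop]
        fun v => Real.exp (-(1/2) * v) := by
      have ht : Tendsto (fun v : ℝ => v ^ k * Real.exp (-(1/2) * v)) atTop (nhds 0) := by
        have := tendsto_rpow_mul_exp_neg_mul_atTop_nhds_zero (k : ℝ) (1/2) (by norm_num)
        refine this.congr' ?_
        filter_upwards [eventually_gt_atTop (0:ℝ)] with v hv
        rw [Real.rpow_natCast]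
      have hb : (fun v : ℝ => v ^ k * Real.exp (-(1/2) * v)) =O[atTop] (fun _ => (1:ℝ)) :=
        ht.isBigO_one ℝ
      calc (fun v : ℝ => v ^ k * Real.exp (-v))
          = fun v => (v ^ k * Real.exp (-(1/2) * v)) * Real.exp (-(1/2) * v) := by
            funext v; rw [mul_assoc, ← Real.exp_add]; ring_nf
        _ =O[atTop] fun v => 1 * Real.exp (-(1/2) * v) := hb.mul (isBigO_refl _ _)
        _ = fun v => Real.exp (-(1/2) * v) := by funext v; rw [one_mul]
    exact h1.trans h2

lemma integrable_pow_div_cosh (k : ℕ) :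
    Integrable (fun v : ℝ => v ^ k / Real.cosh v) := by
  have hIci : IntegrableOn (fun v : ℝ => v ^ k / Real.cosh v) (Ici 0) :=
    (integrableOn_Ici_iff_integrableOn_Ioi).mpr (integrableOn_pow_div_cosh k)
  have hIio : IntegrableOn (fun v : ℝ => v ^ k / Real.cosh v) (Iio 0) := by
    have A : MeasurableEmbedding fun x : ℝ => -x :=
      (Homeomorph.neg ℝ).measurableEmbedding
    rw [← Measure.map_neg_eq_self (volume : Measure ℝ), A.integrableOn_map_iff]
    simp only [Function.comp_def, neg_preimage, neg_Iio, neg_zero]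
    have : (fun x : ℝ => (-x) ^ k / Real.cosh (-x))
        = fun v : ℝ => (-1) ^ k * (v ^ k / Real.cosh v) := by
      funext v
      simp [Real.cosh_neg, neg_pow v k, mul_div_assoc]
    rw [this]
    exact (integrableOn_pow_div_cosh k).const_mul _

  rw [← integrableOn_univ, ← Iio_union_Ici (a := (0:ℝ))]
  exact hIio.union hIci

lemma bernq : (Polynomial.bernoulli 3).eval (1/4 : ℚ) = 3/64 := by
  rw [Polynomial.bernoulli_def]
  rw [show (3:ℕ) = 2 + 1 from rfl]
  simp only [Finset.sum_range_succ, Finset.sum_range_zero, Polynomial.eval_add,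
    Polynomial.eval_zero, Polynomial.eval_smul, Polynomial.eval_monomial,
    bernoulli_zero, bernoulli_one, bernoulli_eq_bernoulli'_of_ne_one (by norm_num : 2 ≠ 1),
    bernoulli'_two, bernoulli_eq_bernoulli'_of_ne_one (by norm_num : 3 ≠ 1), bernoulli'_three]
  norm_num

lemma bern3 : (Polynomial.map (algebraMap ℚ ℝ) (Polynomial.bernoulli 3)).eval (1/4 : ℝ) = 3/64 := by
  have : ((1/4 : ℝ)) = algebraMap ℚ ℝ (1/4 : ℚ) := by norm_num
  rw [this, Polynomial.eval_map, Polynomial.eval₂_at_apply, bernq]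
  norm_num

lemma beta3 : HasSum (fun m : ℕ => (-1 : ℝ) ^ m / (2 * m + 1) ^ 3) (π ^ 3 / 32) := by
  have h := hasSum_one_div_nat_pow_mul_sin (k := 1) one_ne_zero
    (x := 1/4) (by constructor <;> norm_num)
  rw [bern3] at h
  norm_num [Nat.factorial] at h
  have hval : (2 * π) ^ 3 / 2 / 6 * (3 / 64) = π ^3/32 := by ring
  rw [hval] at h
  have hinj : Function.Injective (fun m : ℕ => 2 * m + 1) := by
    intro a b hab
    simp only at hab
    omega
  have h0 : ∀ n ∉ Set.range (fun m : ℕ => 2 * m + 1),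
      (((n:ℝ)) ^ 3)⁻¹ * Real.sin (2 * π * n * (1/4)) = 0 := by
    intro n hn
    simp only [Set.mem_range, not_exists] at hn
    have hev : n % 2 = 0 := by have := hn (n / 2); omega
    obtain ⟨m, rfl⟩ : ∃ m, n = 2 * m := ⟨n / 2, by omega⟩
    have hc : ((2 * m : ℕ) : ℝ) = 2 * (m:ℝ) := by push_cast; ring
    rw [hc]
    have h2 : 2 * π * (2 * (m:ℝ)) * (1/4) = m * π := by ring
    rw [h2, Real.sin_nat_mul_pi, mul_zero]
  have h2 := (Function.Injective.hasSum_iff hinj h0).mpr h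
  refine h2.congr_fun fun m => ?_
  symm
  show ((((2 * m + 1 : ℕ)):ℝ) ^ 3)⁻¹ * Real.sin (2 * π * ((2 * m + 1 : ℕ) : ℝ) * (1/4))
    = (-1 : ℝ) ^ m / (2 * m + 1) ^ 3
  have hc : ((2 * m + 1 : ℕ) : ℝ) = 2 * (m:ℝ) + 1 := by push_cast; ring
  rw [hc]
  have hs : Real.sin (2 * π * (2 * (m:ℝ) + 1) * (1/4)) = (-1 : ℝ) ^ m := by
    have harg : 2 * π * (2 * (m:ℝ) + 1) * (1/4) = π / 2 + m * π := by ring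
    rw [harg, Real.sin_add_nat_mul_pi, Real.sin_pi_div_two, mul_one]
  rw [hs]
  ring

lemma gamma_int {r : ℝ} (hr : 0 < r) :
    ∫ u in Ioi (0:ℝ), u ^ 2 * Real.exp (-(r * u)) = 2 / r ^ 3 := by
  have h := Real.integral_rpow_mul_exp_neg_mul_Ioi (a := 3) (by norm_num) hr
  rw [show (3:ℝ) - 1 = 2 by norm_num] at h
  have hg : Real.Gamma 3 = 2 := by
    have := Real.Gamma_nat_eq_factorial 2
    norm_num at this
    convert this using 2
    norm_num
  rw [hg] at h
  have he : ∀ u ∈ Ioi (0:ℝ), u ^ (2:ℝ) * Real.exp (-(r * u)) = u ^ 2 * Real.exp (-(r * u)) := by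
    intro u hu
    rw [show ((2:ℝ)) = ((2:ℕ):ℝ) by norm_num, Real.rpow_natCast]
  rw [setIntegral_congr_fun measurableSet_Ioi he] at h
  rw [h, div_rpow (by norm_num) hr.le, one_rpow,
    show ((3:ℝ)) = ((3:ℕ):ℝ) by norm_num, Real.rpow_natCast]
  field_simp

lemma integrableOn_sq_exp {r : ℝ} (hr : 0 < r) :
    IntegrableOn (fun u : ℝ => u ^ 2 * Real.exp (-(r * u))) (Ioi 0) := by
  have h := integrableOn_rpow_mul_exp_neg_mul_rpow (p := 1) (s := 2) (b := r)
    (by norm_num) (by norm_num) hr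
  refine h.congr_fun (fun u hu => ?_) measurableSet_Ioi
  dsimp only
  rw [Real.rpow_one, show ((2:ℝ)) = ((2:ℕ):ℝ) by norm_num, Real.rpow_natCast, neg_mul]

lemma intA : ∫ u in Ioi (0:ℝ), u ^ 2 / Real.cosh u = π ^ 3 / 8 := by
  set F : ℕ → ℝ → ℝ := fun n u => (-1) ^ n * 2 * (u ^ 2 * Real.exp (-((2 * n + 1) * u))) with hF
  have hr : ∀ n : ℕ, (0:ℝ) < 2 * n + 1 := fun n => by positivity
  have hFint : ∀ n, Integrable (F n) (volume.restrict (Ioi 0)) := fun n =>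
    ((integrableOn_sq_exp (hr n))).const_mul _
  have hnorm : ∀ n, (∫ u in Ioi (0:ℝ), ‖F n u‖) = 2 * (2 / (2 * n + 1) ^ 3) := by
    intro n
    have : ∀ u ∈ Ioi (0:ℝ), ‖F n u‖ = 2 * (u ^ 2 * Real.exp (-((2 * n + 1) * u))) := by
      intro u hu
      rw [hF]
      simp only [Real.norm_eq_abs, abs_mul, abs_pow, abs_neg, abs_one, one_pow, one_mul,
        Real.abs_exp, abs_of_nonneg (le_of_lt (mem_Ioi.mp hu)), abs_of_nonneg (sq_nonneg u)]
      norm_num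
    rw [setIntegral_congr_fun measurableSet_Ioi this, integral_const_mul, gamma_int (hr n)]
  have hsummable : Summable fun n : ℕ => ∫ u in Ioi (0:ℝ), ‖F n u‖ := by
    simp_rw [hnorm]
    have h1 : Summable fun n : ℕ => (4 : ℝ) / (n + 1) ^ 3 := by
      have hs := (Real.summable_one_div_nat_pow (p := 3)).mpr (by norm_num)
      refine (((summable_nat_add_iff 1).mpr hs).mul_left 4).congr fun n => ?_
      push_cast
      ring
    refine Summable.of_nonneg_of_le (fun n => by positivity) (fun n => ?_) h1
    rw [show (2:ℝ) * (2 / (2 * n + 1) ^ 3) = 4 / (2 * n + 1)^3 by ring]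
    apply div_le_div_of_nonneg_left (by norm_num) (by positivity)
    apply pow_le_pow_left₀ (by positivity)
    push_cast; linarith [Nat.cast_nonneg (α := ℝ) n]
  have key := integral_tsum_of_summable_integral_norm hFint hsummable
  have hpt : ∀ u ∈ Ioi (0:ℝ), (∑' n, F n u) = u ^ 2 / Real.cosh u := by
    intro u hu
    have hu0 : (0:ℝ) < u := hu
    have hlt : ‖-Real.exp (-(2 * u))‖ < 1 := by
      rw [norm_neg, Real.norm_eq_abs, Real.abs_exp]
      exact Real.exp_lt_one_iff.mpr (by linarith)
    have hgeo := tsum_geometric_of_norm_lt_one (ξ := -Real.exp (-(2*u))) hlt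
    have hexp : ∀ n : ℕ, F n u = (2 * u ^ 2 * Real.exp (-u)) * (-Real.exp (-(2*u))) ^ n := by
      intro n
      rw [hF]
      simp only
      rw [neg_pow (Real.exp (-(2*u))), ← Real.exp_nat_mul,
        show -((2 * (n:ℝ) + 1) * u) = -u + (n:ℝ) * -(2*u) by ring, Real.exp_add]
      ring
    rw [tsum_congr hexp, tsum_mul_left, hgeo, Real.cosh_eq]
    have hkey : (1 - -Real.exp (-(2*u))) = Real.exp (-u) * (Real.exp u + Real.exp (-u)) := by
      rw [sub_neg_eq_add, mul_add, ← Real.exp_add, ← Real.exp_add,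
        show -u + u = 0 by ring, show -u + -u = -(2*u) by ring, Real.exp_zero]
    rw [hkey]
    have h1 : Real.exp (-u) ≠ 0 := (Real.exp_pos _).ne'
    have h2 : Real.exp u + Real.exp (-u) ≠ 0 := by positivity
    field_simp
  rw [setIntegral_congr_fun measurableSet_Ioi hpt] at key
  rw [← key]
  have : ∀ n : ℕ, (∫ u in Ioi (0:ℝ), F n u) = 4 * ((-1:ℝ)^n / (2*n+1)^3) := by
    intro n
    rw [hF]
    simp only
    rw [integral_const_mul, gamma_int (hr n)]
    ring
  rw [tsum_congr this, tsum_mul_left, beta3.tsum_eq]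
  ring

lemma intB : ∫ u in Ioi (0:ℝ), 1 / Real.cosh u = π / 2 := by
  have hderiv : ∀ x ∈ Ici (0:ℝ), HasDerivAt (fun u => Real.arctan (Real.sinh u))
      (1 / Real.cosh x) x := by
    intro x _
    have h1 := (Real.hasDerivAt_arctan (Real.sinh x)).comp x (Real.hasDerivAt_sinh x)
    refine h1.congr_deriv (Eq.symm ?_)
    have hc := Real.cosh_sq' x
    have hcp := Real.cosh_pos x
    rw [← hc]
    rw [sq]
    field_simp
  have hint : IntegrableOn (fun u : ℝ => 1 / Real.cosh u) (Ioi 0) := by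
    have := integrableOn_pow_div_cosh 0
    simpa using this
  have htend : Tendsto (fun u => Real.arctan (Real.sinh u)) atTop (nhds (π/2)) := by
    have h1 : Tendsto Real.sinh atTop atTop := by
      refine tendsto_atTop_mono' atTop ?_ tendsto_id
      filter_upwards [eventually_ge_atTop (0:ℝ)] with x hx
      exact Real.self_le_sinh_iff.mpr hx
    have h2 : Tendsto Real.arctan atTop (nhds (π/2)) :=
      Real.tendsto_arctan_atTop.mono_right nhdsWithin_le_nhds
    exact h2.comp h1
  have := integral_Ioi_of_hasDerivAt_of_tendsto' hderiv hint htend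
  rw [this]
  simp

lemma int_odd_cosh : ∫ v : ℝ, v / Real.cosh v = 0 := by
  have h := integral_neg_eq_self (fun v : ℝ => v / Real.cosh v) volume
  have h2 : (∫ v : ℝ, (-v) / Real.cosh (-v)) = ∫ v : ℝ, -(v / Real.cosh v) := by
    congr 1; funext v; rw [Real.cosh_neg]; ring
  rw [h2, integral_neg] at h
  linarith

/-- Second logarithmic moment of a Cauchy(0, d) random variable:
`E((log|x|)²) = (log d)² + π²/4`, i.e. `Var(log|x|) = π²/4`. -/
theorem cauchy_log_abs_sq_moment (d : ℝ) (hd : 0 < d) :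
    ∫ x : ℝ, (d / (π * (x ^ 2 + d ^ 2))) * (Real.log |x|) ^ 2
      = (Real.log d) ^ 2 + π ^ 2 / 4 := by
  set c := Real.log d with hc
  set F : ℝ → ℝ := fun t => (d / (π * (t ^ 2 + d ^ 2))) * (Real.log t) ^ 2 with hF
  have step1 : (∫ x : ℝ, (d / (π * (x ^ 2 + d ^ 2))) * (Real.log |x|) ^ 2)
      = 2 * ∫ t in Ioi (0:ℝ), F t := by
    rw [← integral_comp_abs (f := F)]
    congr 1
    funext x
    rw [hF]
    simp only [sq_abs]
  -- change of variables t = exp u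
  have step2 : (∫ t in Ioi (0:ℝ), F t) = ∫ u : ℝ, Real.exp u * F (Real.exp u) := by
    have himg : Ioi (0:ℝ) = Real.exp '' univ := by rw [Set.image_univ, Real.range_exp]
    rw [himg, integral_image_eq_integral_abs_deriv_smul MeasurableSet.univ
      (fun x _ => (Real.hasDerivAt_exp x).hasDerivWithinAt)
      (Real.exp_strictMono.injective.injOn) F]
    rw [setIntegral_univ]
    congr 1
    funext u
    rw [abs_of_pos (Real.exp_pos u), smul_eq_mul]
  have step3 : (∫ u : ℝ, Real.exp u * F (Real.exp u))
      = ∫ v : ℝ, (v + c) ^ 2 / (2 * π * Real.cosh v) := by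
    rw [← integral_add_right_eq_self (fun u : ℝ => Real.exp u * F (Real.exp u)) c]
    congr 1
    funext v
    rw [hF]
    simp only
    rw [Real.log_exp, Real.exp_add, hc, Real.exp_log hd]
    have hev : Real.exp v > 0 := Real.exp_pos v
    have hd2 : (Real.exp v * d) ^ 2 + d ^ 2 = (Real.exp v * (2 * Real.cosh v)) * d ^ 2 := by
      rw [Real.cosh_eq, Real.exp_neg]
      field_simp
    rw [hd2]
    have hπ : (0:ℝ) < π := Real.pi_pos
    have hchp : Real.cosh v > 0 := Real.cosh_pos v
    field_simp
  have step4 : (∫ v : ℝ, (v + c) ^ 2 / (2 * π * Real.cosh v)) = π ^ 2 / 8 + c ^ 2 / 2 := by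
    have hπ : (0:ℝ) < π := Real.pi_pos
    have h1 : (fun v : ℝ => (v + c) ^ 2 / (2 * π * Real.cosh v))
        = fun v : ℝ => (1 / (2 * π)) * ((v ^ 2 / Real.cosh v + c ^ 2 * (1 / Real.cosh v))
            + (2 * c) * (v / Real.cosh v)) := by
      funext v
      have hchp : Real.cosh v > 0 := Real.cosh_pos v
      field_simp
      ring
    rw [h1]
    have hint2 : Integrable (fun v : ℝ => v ^ 2 / Real.cosh v) := integrable_pow_div_cosh 2
    have hint0 : Integrable (fun v : ℝ => 1 / Real.cosh v) := by
      have := integrable_pow_div_cosh 0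
      simpa using this
    have hint1 : Integrable (fun v : ℝ => v / Real.cosh v) := by
      have := integrable_pow_div_cosh 1
      simpa using this
    have hA : Integrable (fun a : ℝ => a ^ 2 / Real.cosh a + c ^ 2 * (1 / Real.cosh a)) := by
      exact hint2.add (hint0.const_mul _)
    have hB : Integrable (fun a : ℝ => 2 * c * (a / Real.cosh a)) := hint1.const_mul _
    have hC : Integrable (fun a : ℝ => c ^ 2 * (1 / Real.cosh a)) := hint0.const_mul _
    rw [integral_const_mul, integral_add hA hB, integral_add hint2 hC,
      integral_const_mul, integral_const_mul, int_odd_cosh]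
    have he2 : (∫ v : ℝ, v ^ 2 / Real.cosh v) = π ^ 3 / 4 := by
      have := integral_comp_abs (f := fun t : ℝ => t ^ 2 / Real.cosh t)
      have heq : (∫ v : ℝ, |v| ^ 2 / Real.cosh |v|) = ∫ v : ℝ, v ^ 2 / Real.cosh v := by
        congr 1; funext v; rw [sq_abs, Real.cosh_abs]
      rw [heq] at this
      rw [this, intA]; ring
    have he0 : (∫ v : ℝ, 1 / Real.cosh v) = π := by
      have := integral_comp_abs (f := fun t : ℝ => 1 / Real.cosh t)
      have heq : (∫ v : ℝ, 1 / Real.cosh |v|) = ∫ v : ℝ, 1 / Real.cosh v := by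
        congr 1; funext v; rw [Real.cosh_abs]
      rw [heq] at this
      rw [this, intB]; ring
    rw [he2, he0]
    field_simp
    ring
  rw [step1, step2, step3, step4]
  ring
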